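/- Let G be the bipartite-like graph G_{n,k} with vertex set V = S ∪ T ∪ C, where |S| = |T| = n, |C| = k, edges exactly between every vertex of C and every vertex of S ∪ T, and k ≤ 2n. Then for every subset A ⊆ V with 0 < |A| ≤ |V|/2, the number of edges |∂A| between A and its complement satisfies |∂A| ≥ (k/8)·|A|. Hence the Cheeger constant of G_{n,k} is at least k/8. -/

import Mathlib

/-- The graph `G_{n,k}`: vertex set `(S ⊕ T) ⊕ C` with `|S| = |T| = n`, `|C| = k`;
edges exactly between every central vertex and every source/target vertex. -/
def twoRadiusGraph (n k : ℕ) : SimpleGraph ((Fin n ⊕ Fin n) ⊕ Fin k) where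
  Adj x y := (x.isRight ∧ y.isLeft) ∨ (x.isLeft ∧ y.isRight)
  symm := ⟨by intro x y h; tauto⟩
  loopless := ⟨by intro x h; rcases h with ⟨h1, h2⟩ | ⟨h1, h2⟩ <;> cases x <;> simp_all⟩

instance (n k : ℕ) : DecidableRel (twoRadiusGraph n k).Adj :=
  fun x y => inferInstanceAs (Decidable (_ ∨ _))

/-- Number of edges of `G` with exactly one endpoint in `A`. -/
def edgeBoundary {V : Type*} [Fintype V] [DecidableEq V]
    (G : SimpleGraph V) [DecidableRel G.Adj] (A : Finset V) : ℕ :=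
  ((A ×ˢ Aᶜ).filter fun p => G.Adj p.1 p.2).card

open Finset in
lemma card_filter_isLeft {α β : Type*} [DecidableEq α] [DecidableEq β]
    (s : Finset (α ⊕ β)) : (s.filter (fun x => x.isLeft = true)).card = s.toLeft.card := by
  rw [show s.filter (fun x => x.isLeft = true) = s.toLeft.map ⟨Sum.inl, Sum.inl_injective⟩ by
    ext x; cases x <;> simp, card_map]

open Finset in
lemma card_filter_isRight {α β : Type*} [DecidableEq α] [DecidableEq β]
    (s : Finset (α ⊕ β)) : (s.filter (fun x => x.isRight = true)).card = s.toRight.card := by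
  rw [show s.filter (fun x => x.isRight = true) = s.toRight.map ⟨Sum.inr, Sum.inr_injective⟩ by
    ext x; cases x <;> simp, card_map]

open Finset in
lemma boundary_count (n k : ℕ) (A : Finset ((Fin n ⊕ Fin n) ⊕ Fin k)) :
    edgeBoundary (twoRadiusGraph n k) A
      = A.toLeft.card * Aᶜ.toRight.card + A.toRight.card * Aᶜ.toLeft.card := by
  have : edgeBoundary (twoRadiusGraph n k) A
      = ((A ×ˢ Aᶜ).filter fun p => (p.1.isRight = true ∧ p.2.isLeft = true)
          ∨ (p.1.isLeft = true ∧ p.2.isRight = true)).card := rfl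
  have e1 : (A ×ˢ Aᶜ).filter (fun p => (p.1.isRight = true ∧ p.2.isLeft = true))
      = (A.filter fun x => x.isRight = true) ×ˢ (Aᶜ.filter fun x => x.isLeft = true) := by
    ext ⟨x, y⟩; simp only [mem_filter, mem_product]; tauto
  have e2 : (A ×ˢ Aᶜ).filter (fun p => (p.1.isLeft = true ∧ p.2.isRight = true))
      = (A.filter fun x => x.isLeft = true) ×ˢ (Aᶜ.filter fun x => x.isRight = true) := by
    ext ⟨x, y⟩; simp only [mem_filter, mem_product]; tauto
  rw [this, filter_or, e1, e2, card_union_of_disjoint, card_product,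
    card_product, card_filter_isLeft, card_filter_isRight, card_filter_isLeft,
    card_filter_isRight]
  · ring
  · rw [Finset.disjoint_left]
    rintro ⟨x, y⟩ h1 h2
    simp only [mem_product, mem_filter] at h1 h2
    rcases x with x | x <;> simp_all

open Finset in
lemma compl_toLeft {α β : Type*} [Fintype α] [Fintype β] [DecidableEq α] [DecidableEq β]
    (s : Finset (α ⊕ β)) : (sᶜ).toLeft = s.toLeftᶜ := by ext x; simp

open Finset in
lemma compl_toRight {α β : Type*} [Fintype α] [Fintype β] [DecidableEq α] [DecidableEq β]
    (s : Finset (α ⊕ β)) : (sᶜ).toRight = s.toRightᶜ := by ext x; simp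

/-- Cheeger bound for `G_{n,k}`: if `k ≤ 2n`, then every `A` with
`0 < |A| ≤ |V|/2` satisfies `|∂A| ≥ (k/8)·|A|`; hence the Cheeger constant of
`G_{n,k}` is at least `k/8`. -/
theorem twoRadius_cheeger_bound (n k : ℕ) (hk : k ≤ 2 * n)
    (A : Finset ((Fin n ⊕ Fin n) ⊕ Fin k)) (hA : 0 < A.card)
    (hA2 : (A.card : ℝ) ≤ (2 * n + k : ℝ) / 2) :
    (k : ℝ) / 8 * A.card ≤ (edgeBoundary (twoRadiusGraph n k) A : ℝ) := by
  rw [boundary_count, compl_toLeft, compl_toRight]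
  set a := A.toLeft.card with ha'
  set c := A.toRight.card with hc'
  have hac : a + c = A.card := Finset.card_toLeft_add_card_toRight
  have haN : a ≤ 2 * n := by
    simpa using (Finset.card_le_univ A.toLeft).trans_eq (by simp [Fintype.card_sum, two_mul])
  have hcK : c ≤ k := by simpa using Finset.card_le_univ A.toRight
  rw [Finset.card_compl, Finset.card_compl]
  have e1 : (Fintype.card (Fin n ⊕ Fin n)) = 2 * n := by simp [two_mul]
  have e2 : (Fintype.card (Fin k)) = k := by simp
  rw [e1, e2]
  push_cast [haN, hcK, ← hac]
  -- real inequality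
  have key : ∀ x y N K : ℝ, 0 ≤ x → 0 ≤ y → x ≤ N → y ≤ K → K ≤ N →
      2 * (x + y) ≤ N + K → K * (x + y) ≤ 8 * (x * (K - y) + y * (N - x)) := by
    intro x y N K hx0 hy0 hxN hyK hKN hsum
    rcases le_or_gt (2 * y) K with h1 | h1
    · rcases le_or_gt K (8 * (N - x)) with h2 | h2
      · nlinarith [mul_nonneg hx0 (sub_nonneg.2 h1), mul_nonneg hy0 (sub_nonneg.2 h2)]
      · nlinarith [mul_nonneg hx0 (sub_nonneg.2 h1),
          mul_nonneg hy0 (by nlinarith : (0:ℝ) ≤ 8 * x - 7 * N), mul_nonneg hx0 hy0]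
    · nlinarith [mul_nonneg hy0 (by nlinarith : (0:ℝ) ≤ N - 2 * x),
        mul_nonneg hy0 (sub_nonneg.2 hKN), mul_nonneg hx0 (sub_nonneg.2 hyK)]
  have := key a c (2 * n) k (by positivity) (by positivity) (by exact_mod_cast haN)
    (by exact_mod_cast hcK) (by exact_mod_cast hk)
    (by rw [show ((a : ℝ) + c) = (A.card : ℝ) by exact_mod_cast hac]; linarith)
  rw [Nat.cast_sub (show A.toRight.card ≤ k from hcK), Nat.cast_sub (show A.toLeft.card ≤ 2 * n from haN)]
  rw [← ha', ← hc']
  push_cast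
  linarith
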